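/- Let χ, η, χ′ be real numbers with 0 ≤ χ ≤ η < χ′ ≤ π/2, set c = exp(η√−1), and let Γ(χ, χ′) = { r·exp(ψ√−1) : r ≥ 0, χ ≤ ψ < χ′ } be the semi-open sector and Γ̄(χ, χ′) = ℂ \ Γ(χ, χ′) its exterior. Then the distance from c to Γ̄(χ, χ′), namely inf_{z ∈ Γ̄(χ, χ′)} |c − z|, is equal to sin(ψ_0) where ψ_0 = min{η − χ, χ′ − η}. -/

import Mathlib

open Complex Metric

private lemma exp_rot (θ ψ : ℝ) :
    Complex.exp (-(θ:ℂ) * Complex.I) * Complex.exp ((ψ:ℂ) * Complex.I)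
      = Complex.exp (((ψ - θ : ℝ):ℂ) * Complex.I) := by
  rw [← Complex.exp_add]; push_cast; ring_nf

private lemma im_rot (θ ψ r : ℝ) :
    (Complex.exp (-(θ:ℂ) * Complex.I) * ((r:ℂ) * Complex.exp ((ψ:ℂ) * Complex.I))).im
      = r * Real.sin (ψ - θ) := by
  rw [mul_left_comm, exp_rot]
  simp only [Complex.mul_im, Complex.ofReal_re, Complex.ofReal_im,
    Complex.exp_ofReal_mul_I_im, zero_mul, add_zero]

private lemma re_rot (θ ψ r : ℝ) :
    (Complex.exp (-(θ:ℂ) * Complex.I) * ((r:ℂ) * Complex.exp ((ψ:ℂ) * Complex.I))).re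
      = r * Real.cos (ψ - θ) := by
  rw [mul_left_comm, exp_rot]
  simp only [Complex.mul_re, Complex.ofReal_re, Complex.ofReal_im,
    Complex.exp_ofReal_mul_I_re, zero_mul, sub_zero]

private lemma abs_exp_rot (θ : ℝ) : ‖Complex.exp (-(θ:ℂ) * Complex.I)‖ = 1 := by
  have h : -(θ:ℂ) * Complex.I = ((-θ : ℝ) : ℂ) * Complex.I := by push_cast; ring
  rw [h, Complex.norm_exp_ofReal_mul_I]

set_option maxHeartbeats 1000000 in
/-- Second assertion of Lemma 7.2 of the paper: for `0 ≤ χ ≤ η < χ' ≤ π/2`,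
the distance from the unit-circle point `c = e^{ηi}` to the exterior of the
semi-open sector `Γ(χ, χ') = {r e^{ψi} : r ≥ 0, χ ≤ ψ < χ'}` equals
`sin(min(η - χ, χ' - η))`. -/
theorem dist_to_sector_exterior (χ η χ' : ℝ)
    (h1 : 0 ≤ χ) (h2 : χ ≤ η) (h3 : η < χ') (h4 : χ' ≤ Real.pi / 2) :
    Metric.infDist (Complex.exp (η * Complex.I))
      {z : ℂ | ∃ r : ℝ, 0 ≤ r ∧ ∃ ψ : ℝ, χ ≤ ψ ∧ ψ < χ' ∧
        z = r * Complex.exp (ψ * Complex.I)}ᶜ =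
      Real.sin (min (η - χ) (χ' - η)) := by
  have pi_pos := Real.pi_pos
  set c : ℂ := Complex.exp (η * Complex.I) with hc
  set S : Set ℂ := {z : ℂ | ∃ r : ℝ, 0 ≤ r ∧ ∃ ψ : ℝ, χ ≤ ψ ∧ ψ < χ' ∧
        z = r * Complex.exp (ψ * Complex.I)} with hS
  have hη2 : η ≤ Real.pi / 2 := le_of_lt (lt_of_lt_of_le h3 h4)
  have hηχ : 0 ≤ η - χ := by linarith
  have hχ'η : 0 < χ' - η := by linarith
  have hηχ2 : η - χ ≤ Real.pi / 2 := by linarith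
  have hχ'η2 : χ' - η ≤ Real.pi / 2 := by linarith
  set m : ℝ := min (η - χ) (χ' - η) with hm
  have hm0 : 0 ≤ m := le_min hηχ (le_of_lt hχ'η)
  have hm1 : m ≤ η - χ := min_le_left _ _
  have hm2 : m ≤ χ' - η := min_le_right _ _
  have hsin1 : Real.sin m ≤ Real.sin (η - χ) :=
    Real.sin_le_sin_of_le_of_le_pi_div_two (by linarith) (by linarith) hm1
  have hsin2 : Real.sin m ≤ Real.sin (χ' - η) :=
    Real.sin_le_sin_of_le_of_le_pi_div_two (by linarith) (by linarith) hm2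
  have hsinm0 : 0 ≤ Real.sin m := Real.sin_nonneg_of_nonneg_of_le_pi hm0 (by linarith)
  have hsin10 : 0 ≤ Real.sin (η - χ) := Real.sin_nonneg_of_nonneg_of_le_pi hηχ (by linarith)
  have hsin20 : 0 ≤ Real.sin (χ' - η) :=
    Real.sin_nonneg_of_nonneg_of_le_pi (le_of_lt hχ'η) (by linarith)
  -- membership constraints
  have memχ : ∀ z ∈ S, 0 ≤ (Complex.exp (-(χ:ℂ) * Complex.I) * z).im := by
    rintro z ⟨r, hr, ψ, hψ1, hψ2, rfl⟩
    rw [im_rot]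
    exact mul_nonneg hr (Real.sin_nonneg_of_nonneg_of_le_pi (by linarith) (by linarith))
  have memχ' : ∀ z ∈ S, (Complex.exp (-(χ':ℂ) * Complex.I) * z).im ≤ 0 := by
    rintro z ⟨r, hr, ψ, hψ1, hψ2, rfl⟩
    rw [im_rot]
    exact mul_nonpos_of_nonneg_of_nonpos hr
      (Real.sin_nonpos_of_nonpos_of_neg_pi_le (by linarith) (by linarith))
  -- nonempty complement
  have hne : Sᶜ.Nonempty := by
    refine ⟨-Complex.I, fun hmem => ?_⟩
    have h0 := memχ _ hmem
    have him : (Complex.exp (-(χ:ℂ) * Complex.I) * (-Complex.I)).im = -Real.cos χ := by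
      have hrot : -(χ:ℂ) * Complex.I = ((-χ:ℝ):ℂ) * Complex.I := by push_cast; ring
      rw [hrot]
      have hre := Complex.exp_ofReal_mul_I_re (-χ)
      have him2 := Complex.exp_ofReal_mul_I_im (-χ)
      simp only [Complex.mul_im, Complex.neg_im, Complex.I_im, Complex.neg_re, Complex.I_re,
        hre, him2, Real.cos_neg]
      ring
    rw [him] at h0
    have hcos : 0 < Real.cos χ := Real.cos_pos_of_mem_Ioo ⟨by linarith, by linarith⟩
    linarith
  have imc : ∀ θ : ℝ, (Complex.exp (-(θ:ℂ) * Complex.I) * c).im = Real.sin (η - θ) := by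
    intro θ; rw [hc, exp_rot, Complex.exp_ofReal_mul_I_im]
  have e0 : ∀ θ : ℝ, Complex.exp (-(θ:ℂ) * Complex.I) * Complex.exp ((θ:ℂ) * Complex.I) = 1 := by
    intro θ; rw [exp_rot]; norm_num
  -- upper bound on the χ side
  have ub1 : Metric.infDist c Sᶜ ≤ Real.sin (η - χ) := by
    apply le_of_forall_pos_le_add
    intro ε hε
    set t : ℝ := Real.sin (η - χ) + ε with ht
    have ht0 : 0 ≤ t := by linarith
    set z : ℂ := c - (t:ℂ) * (Complex.I * Complex.exp ((χ:ℂ) * Complex.I)) with hz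
    have hzmem : z ∈ Sᶜ := by
      intro hmem
      have h0 := memχ z hmem
      have e2 : Complex.exp (-(χ:ℂ) * Complex.I) * z
          = Complex.exp (((η - χ : ℝ):ℂ) * Complex.I) - (t:ℂ) * Complex.I := by
        rw [hz, hc]
        linear_combination (exp_rot χ η) - (t:ℂ) * Complex.I * (e0 χ)
      rw [e2] at h0
      simp only [Complex.sub_im, Complex.exp_ofReal_mul_I_im, Complex.mul_im,
        Complex.ofReal_re, Complex.ofReal_im, Complex.I_im, Complex.I_re,
        mul_one, mul_zero, zero_mul, add_zero] at h0
      linarith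
    have hd : dist c z = t := by
      rw [Complex.dist_eq, hz]
      have : c - (c - (t:ℂ) * (Complex.I * Complex.exp ((χ:ℂ) * Complex.I)))
          = (t:ℂ) * (Complex.I * Complex.exp ((χ:ℂ) * Complex.I)) := by ring
      rw [this, norm_mul, norm_mul, Complex.norm_real, Real.norm_eq_abs, Complex.norm_I,
        Complex.norm_exp_ofReal_mul_I, _root_.abs_of_nonneg ht0, mul_one, mul_one]
    calc Metric.infDist c Sᶜ ≤ dist c z := Metric.infDist_le_dist_of_mem hzmem
      _ = Real.sin (η - χ) + ε := by rw [hd]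
  -- upper bound on the χ' side
  have ub2 : Metric.infDist c Sᶜ ≤ Real.sin (χ' - η) := by
    apply le_of_forall_pos_le_add
    intro ε hε
    set t : ℝ := Real.sin (χ' - η) + ε with ht
    have ht0 : 0 ≤ t := by linarith
    set z : ℂ := c + (t:ℂ) * (Complex.I * Complex.exp ((χ':ℂ) * Complex.I)) with hz
    have hzmem : z ∈ Sᶜ := by
      intro hmem
      have h0 := memχ' z hmem
      have e2 : Complex.exp (-(χ':ℂ) * Complex.I) * z
          = Complex.exp (((η - χ' : ℝ):ℂ) * Complex.I) + (t:ℂ) * Complex.I := by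
        rw [hz, hc]
        linear_combination (exp_rot χ' η) + (t:ℂ) * Complex.I * (e0 χ')
      rw [e2] at h0
      simp only [Complex.add_im, Complex.exp_ofReal_mul_I_im, Complex.mul_im,
        Complex.ofReal_re, Complex.ofReal_im, Complex.I_im, Complex.I_re,
        mul_one, mul_zero, zero_mul, add_zero] at h0
      have hneg : Real.sin (η - χ') = -Real.sin (χ' - η) := by
        rw [show η - χ' = -(χ' - η) by ring, Real.sin_neg]
      rw [hneg] at h0
      linarith
    have hd : dist c z = t := by
      rw [Complex.dist_eq, hz]
      have : c - (c + (t:ℂ) * (Complex.I * Complex.exp ((χ':ℂ) * Complex.I)))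
          = -((t:ℂ) * (Complex.I * Complex.exp ((χ':ℂ) * Complex.I))) := by ring
      rw [this, norm_neg, norm_mul, norm_mul, Complex.norm_real, Real.norm_eq_abs, Complex.norm_I,
        Complex.norm_exp_ofReal_mul_I, _root_.abs_of_nonneg ht0, mul_one, mul_one]
    calc Metric.infDist c Sᶜ ≤ dist c z := Metric.infDist_le_dist_of_mem hzmem
      _ = Real.sin (χ' - η) + ε := by rw [hd]
  have hub : Metric.infDist c Sᶜ ≤ Real.sin m := by
    rcases min_cases (η - χ) (χ' - η) with ⟨he, _⟩ | ⟨he, _⟩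
    · rw [hm, he]; exact ub1
    · rw [hm, he]; exact ub2
  -- lower bound
  have hlb : Real.sin m ≤ Metric.infDist c Sᶜ := by
    by_contra hcon
    push_neg at hcon
    obtain ⟨z, hzmem, hdz⟩ := (Metric.infDist_lt_iff hne).1 hcon
    apply hzmem
    have habs : ‖c - z‖ < Real.sin m := by
      rw [← Complex.dist_eq]; exact hdz
    have key : ∀ θ : ℝ, |(Complex.exp (-(θ:ℂ) * Complex.I) * (c - z)).im| ≤ ‖c - z‖ := by
      intro θ
      calc |(Complex.exp (-(θ:ℂ) * Complex.I) * (c - z)).im|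
          ≤ ‖Complex.exp (-(θ:ℂ) * Complex.I) * (c - z)‖ := Complex.abs_im_le_norm _
        _ = ‖c - z‖ := by rw [norm_mul, abs_exp_rot, one_mul]
    have keyre : ∀ θ : ℝ, |(Complex.exp (-(θ:ℂ) * Complex.I) * (c - z)).re| ≤ ‖c - z‖ := by
      intro θ
      calc |(Complex.exp (-(θ:ℂ) * Complex.I) * (c - z)).re|
          ≤ ‖Complex.exp (-(θ:ℂ) * Complex.I) * (c - z)‖ := Complex.abs_re_le_norm _
        _ = ‖c - z‖ := by rw [norm_mul, abs_exp_rot, one_mul]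
    have split : ∀ θ : ℝ, (Complex.exp (-(θ:ℂ) * Complex.I) * z).im
        = Real.sin (η - θ) - (Complex.exp (-(θ:ℂ) * Complex.I) * (c - z)).im := by
      intro θ
      rw [← imc θ]
      have : Complex.exp (-(θ:ℂ) * Complex.I) * z
          = Complex.exp (-(θ:ℂ) * Complex.I) * c - Complex.exp (-(θ:ℂ) * Complex.I) * (c - z) := by
        ring
      rw [this, Complex.sub_im]
    have hz1 : 0 < (Complex.exp (-(χ:ℂ) * Complex.I) * z).im := by
      rw [split χ]
      have k := abs_le.mp (key χ)
      linarith [k.2]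
    have hz2 : (Complex.exp (-(χ':ℂ) * Complex.I) * z).im < 0 := by
      rw [split χ']
      have k := abs_le.mp (key χ')
      have hneg : Real.sin (η - χ') = -Real.sin (χ' - η) := by
        rw [show η - χ' = -(χ' - η) by ring, Real.sin_neg]
      rw [hneg]
      linarith [k.1]
    have hz3 : 0 < (Complex.exp (-(η:ℂ) * Complex.I) * z).re := by
      have splitre : (Complex.exp (-(η:ℂ) * Complex.I) * z).re
          = 1 - (Complex.exp (-(η:ℂ) * Complex.I) * (c - z)).re := by
        have hcre : (Complex.exp (-(η:ℂ) * Complex.I) * c).re = 1 := by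
          rw [hc, e0 η, Complex.one_re]
        rw [← hcre]
        have : Complex.exp (-(η:ℂ) * Complex.I) * z
            = Complex.exp (-(η:ℂ) * Complex.I) * c - Complex.exp (-(η:ℂ) * Complex.I) * (c - z) := by
          ring
        rw [this, Complex.sub_re]
      rw [splitre]
      have k := abs_le.mp (keyre η)
      have hs1 : Real.sin m ≤ 1 := Real.sin_le_one m
      linarith [k.2]
    -- now z ≠ 0
    have hzne : z ≠ 0 := by
      intro h0
      rw [h0, mul_zero] at hz1
      simp at hz1
    have hzeq : z = (‖z‖ : ℂ) * Complex.exp ((z.arg : ℂ) * Complex.I) :=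
      (Complex.norm_mul_exp_arg_mul_I z).symm
    have hr : 0 < ‖z‖ := norm_pos_iff.mpr hzne
    set ψ : ℝ := z.arg with hψ
    have hψlo : -Real.pi < ψ := Complex.neg_pi_lt_arg z
    have hψhi : ψ ≤ Real.pi := Complex.arg_le_pi z
    have hs1 : 0 < Real.sin (ψ - χ) := by
      rw [hzeq, im_rot] at hz1
      nlinarith
    have hs2 : Real.sin (ψ - χ') < 0 := by
      rw [hzeq, im_rot] at hz2
      nlinarith
    have hs3 : 0 < Real.cos (ψ - η) := by
      rw [hzeq, re_rot] at hz3
      nlinarith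
    -- from cos positivity: ψ ∈ (η - π/2, η + π/2)
    have hA : ψ - η < Real.pi / 2 := by
      by_contra hA
      push_neg at hA
      have : Real.cos (ψ - η) ≤ 0 :=
        Real.cos_nonpos_of_pi_div_two_le_of_le hA (by linarith)
      linarith
    have hB : -(Real.pi / 2) < ψ - η := by
      by_contra hB
      push_neg at hB
      have : Real.cos (η - ψ) ≤ 0 :=
        Real.cos_nonpos_of_pi_div_two_le_of_le (by linarith) (by linarith)
      rw [show η - ψ = -(ψ - η) by ring, Real.cos_neg] at this
      linarith
    have hχψ : χ ≤ ψ := by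
      by_contra hlt
      push_neg at hlt
      have : Real.sin (ψ - χ) ≤ 0 :=
        Real.sin_nonpos_of_nonpos_of_neg_pi_le (by linarith) (by linarith)
      linarith
    have hψχ' : ψ < χ' := by
      by_contra hge
      push_neg at hge
      have : 0 ≤ Real.sin (ψ - χ') :=
        Real.sin_nonneg_of_nonneg_of_le_pi (by linarith) (by linarith)
      linarith
    exact ⟨‖z‖, norm_nonneg z, ψ, hχψ, hψχ', hzeq⟩
  linarith
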